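/- Let N ≥ 1 be squarefree and d a positive divisor of N. Choose α, β, γ, δ ∈ ℤ with αδd − βγN/d = 1, set V_d := (1/√d)·[[αd, βN],[γ, δd]] and F_d := [[V_d^{−1}, 0],[0, V_dᵗ]] ∈ Sp₄(ℝ) (2×2 blocks). Then F_d² ∈ Σ_N, F_d·Σ_N·F_d^{−1} = Σ_N, and F_d·Σ_{N,∞}·F_d^{−1} = Σ_{N,∞}. -/

import Mathlib

open scoped Classical
open Complex Matrix Finset

noncomputable section

/-- The Siegel upper half-space of degree 2, in coordinates `(τ, z, τ′)`. -/
def H2 : Set (ℂ × ℂ × ℂ) :=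
  {w | 0 < w.1.im ∧ 0 < w.2.2.im ∧ w.2.1.im ^ 2 < w.1.im * w.2.2.im}

/-- The symmetric 2×2 matrix `[[τ, z],[z, τ′]]` attached to `(τ, z, τ′)`. -/
def matOf (w : ℂ × ℂ × ℂ) : Matrix (Fin 2) (Fin 2) ℂ :=
  !![w.1, w.2.1; w.2.1, w.2.2]

/-- The triple `(Z 0 0, Z 0 1, Z 1 1)` attached to a symmetric 2×2 matrix. -/
def tripleOf (Z : Matrix (Fin 2) (Fin 2) ℂ) : ℂ × ℂ × ℂ :=
  (Z 0 0, Z 0 1, Z 1 1)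

/-- The 2×2 block at block-position `(a, b)` of a 4×4 real matrix. -/
def blk (M : Matrix (Fin 4) (Fin 4) ℝ) (a b : Fin 2) : Matrix (Fin 2) (Fin 2) ℝ :=
  Matrix.of fun i j => M ⟨2 * a.1 + i.1, by omega⟩ ⟨2 * b.1 + j.1, by omega⟩

def J4 : Matrix (Fin 4) (Fin 4) ℝ := !![0,0,-1,0; 0,0,0,-1; 1,0,0,0; 0,1,0,0]

/-- Membership in `Sp₄(ℝ)`. -/
def IsSymplectic (M : Matrix (Fin 4) (Fin 4) ℝ) : Prop := Mᵀ * J4 * M = J4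

def ZIntegral (x : ℝ) : Prop := ∃ n : ℤ, x = n

/-- The paramodular group `Σ_N` of degree 2 and level `N`, realized in `Sp₄(ℝ)`. -/
def ParamodularGroup (N : ℤ) : Set (Matrix (Fin 4) (Fin 4) ℝ) :=
  {M | IsSymplectic M ∧
    (∀ i j : Fin 4, (i, j) ≠ ((1 : Fin 4), (3 : Fin 4)) → ZIntegral (M i j)) ∧
    (∃ n : ℤ, M 1 3 = n / N) ∧
    (∃ n : ℤ, M 0 1 = N * n) ∧ (∃ n : ℤ, M 2 1 = N * n) ∧
    (∃ n : ℤ, M 3 0 = N * n) ∧ (∃ n : ℤ, M 3 1 = N * n) ∧ (∃ n : ℤ, M 3 2 = N * n)}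

/-- The Jacobi subgroup `Σ_N^J` of the paramodular group. -/
def JacobiGroup (N : ℤ) : Set (Matrix (Fin 4) (Fin 4) ℝ) :=
  {M | M ∈ ParamodularGroup N ∧
    (M 1 1 = 1 ∨ M 1 1 = -1) ∧ M 0 1 = 0 ∧ M 2 1 = 0 ∧ M 3 1 = 0 ∧
    (M 3 3 = 1 ∨ M 3 3 = -1) ∧ M 3 0 = 0 ∧ M 3 2 = 0}

/-- The translation subgroup `Γ_N` of the Jacobi group. -/
def TransGroup (N : ℤ) : Set (Matrix (Fin 4) (Fin 4) ℝ) :=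
  {M | M ∈ ParamodularGroup N ∧ blk M 0 0 = 1 ∧ blk M 1 0 = 0 ∧ blk M 1 1 = 1}

/-- The subgroup `Σ_{N,∞}` of the paramodular group (vanishing lower-left block). -/
def ParamodularInfinity (N : ℤ) : Set (Matrix (Fin 4) (Fin 4) ℝ) :=
  {M | M ∈ ParamodularGroup N ∧ blk M 1 0 = 0}

/-- The Petersson slash action `(f |_k M)(Z) = det(CZ+D)^{-k} f((AZ+B)(CZ+D)⁻¹)`. -/
def slash (k : ℤ) (M : Matrix (Fin 4) (Fin 4) ℝ) (f : ℂ × ℂ × ℂ → ℂ)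
    (w : ℂ × ℂ × ℂ) : ℂ :=
  ((blk M 1 0).map Complex.ofReal * matOf w + (blk M 1 1).map Complex.ofReal).det ^ (-k) *
    f (tripleOf (((blk M 0 0).map Complex.ofReal * matOf w + (blk M 0 1).map Complex.ofReal) *
      ((blk M 1 0).map Complex.ofReal * matOf w + (blk M 1 1).map Complex.ofReal)⁻¹))

/-- One term of the Fourier expansion of level `N`. -/
def fourierTerm (N : ℤ) (a : ℤ → ℤ → ℤ → ℂ) (w : ℂ × ℂ × ℂ) (t : ℤ × ℤ × ℤ) : ℂ :=
  a t.1 t.2.1 t.2.2 * Complex.exp (2 * Real.pi * Complex.I *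
    ((t.1 : ℂ) * w.1 + (t.2.1 : ℂ) * w.2.1 + (t.2.2 : ℂ) * (N : ℂ) * w.2.2))

/-- `f` has Fourier coefficients `a` for level `N`. -/
def HasFourierCoeffs (N : ℤ) (f : ℂ × ℂ × ℂ → ℂ) (a : ℤ → ℤ → ℤ → ℂ) : Prop :=
  (∀ n r m : ℤ, ¬(0 ≤ n ∧ 0 ≤ m ∧ r ^ 2 ≤ 4 * n * m * N) → a n r m = 0) ∧
  ∀ w ∈ H2, Summable (fun t : ℤ × ℤ × ℤ => ‖fourierTerm N a w t‖) ∧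
    HasSum (fourierTerm N a w) (f w)

/-- The divisor power sum `σ_{k-1}(t) = ∑_{δ ∣ t} δ^{k-1}`. -/
def sigmaz (k : ℤ) (t : ℕ) : ℂ := ∑ δ ∈ t.divisors, (δ : ℂ) ^ (k - 1)

/-- The nonnegative gcd of three integers. -/
def gcd3 (n r m : ℤ) : ℕ := Int.gcd (Int.gcd n r) m

/-- The Maaß relations of weight `k` for a coefficient function. -/
def MaassRelations (k : ℤ) (a : ℤ → ℤ → ℤ → ℂ) : Prop :=
  ∀ n r m : ℤ, ¬(n = 0 ∧ r = 0 ∧ m = 0) →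
    a n r m = ∑ δ ∈ (gcd3 n r m).divisors,
      (δ : ℂ) ^ (k - 1) * a (n * m / (δ : ℤ) ^ 2) (r / (δ : ℤ)) 1

/-- The operator `T_p^↑`. -/
def Tup (k : ℤ) (p : ℕ) (f : ℂ × ℂ × ℂ → ℂ) (w : ℂ × ℂ × ℂ) : ℂ :=
  (((p : ℝ) ^ ((k : ℝ) / 2) : ℝ) : ℂ) * f ((p : ℂ) * w.1, (Real.sqrt p : ℂ) * w.2.1, w.2.2) +
  (((p : ℝ) ^ (-(k : ℝ) / 2) : ℝ) : ℂ) *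
    ∑ u ∈ Finset.range p, f ((w.1 + (u : ℂ)) / (p : ℂ), w.2.1 / (Real.sqrt p : ℂ), w.2.2)

/-- The operator `T_p^↓`. -/
def Tdown (N k : ℤ) (p : ℕ) (f : ℂ × ℂ × ℂ → ℂ) (w : ℂ × ℂ × ℂ) : ℂ :=
  (((p : ℝ) ^ ((k : ℝ) / 2) : ℝ) : ℂ) * f (w.1, (Real.sqrt p : ℂ) * w.2.1, (p : ℂ) * w.2.2) +
  (((p : ℝ) ^ (-(k : ℝ) / 2) : ℝ) : ℂ) *
    ∑ u ∈ Finset.range p,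
      f (w.1, w.2.1 / (Real.sqrt p : ℂ), (w.2.2 + (u : ℂ) / (N : ℂ)) / (p : ℂ))

/-- Condition (ii) of Lemma 1 on the Fourier coefficients. -/
def HeckeCondition (k : ℤ) (p : ℕ) (a : ℤ → ℤ → ℤ → ℂ) : Prop :=
  ∀ n r m : ℤ,
    a n r (p * m) + (p : ℂ) ^ (k - 1) *
      (if (p : ℤ) ∣ r ∧ (p : ℤ) ∣ m then a n (r / p) (m / p) else 0)
    = a (p * n) r m + (p : ℂ) ^ (k - 1) *
      (if (p : ℤ) ∣ n ∧ (p : ℤ) ∣ r then a (n / p) (r / p) m else 0)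

end

section FrickeAux

open Matrix

/-- The integer "numerator" matrix of the Fricke element `F_d` (before dividing by `√d`). -/
noncomputable def Amat (α β γ δ d N : ℤ) : Matrix (Fin 4) (Fin 4) ℝ :=
  !![((δ*d : ℤ) : ℝ), ((-(β*N) : ℤ) : ℝ), ((0:ℤ):ℝ), ((0:ℤ):ℝ);
     ((-γ : ℤ) : ℝ), ((α*d : ℤ) : ℝ), ((0:ℤ):ℝ), ((0:ℤ):ℝ);
     ((0:ℤ):ℝ), ((0:ℤ):ℝ), ((α*d : ℤ) : ℝ), ((γ : ℤ) : ℝ);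
     ((0:ℤ):ℝ), ((0:ℤ):ℝ), ((β*N : ℤ) : ℝ), ((δ*d : ℤ) : ℝ)]

/-- The Fricke element as an explicit 4×4 matrix. -/
noncomputable def FF (α β γ δ d N : ℤ) : Matrix (Fin 4) (Fin 4) ℝ :=
  (Real.sqrt d)⁻¹ • Amat α β γ δ d N

lemma symp_mul {P Q : Matrix (Fin 4) (Fin 4) ℝ} (hP : IsSymplectic P) (hQ : IsSymplectic Q) :
    IsSymplectic (P * Q) := by
  unfold IsSymplectic at *
  rw [Matrix.transpose_mul]
  have : Qᵀ * Pᵀ * J4 * (P * Q) = Qᵀ * (Pᵀ * J4 * P) * Q := by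
    simp only [Matrix.mul_assoc]
  rw [this, hP, hQ]

lemma FF_mul_mid (α β γ δ α' β' γ' δ' d N : ℤ) (hd : 0 < d) (M : Matrix (Fin 4) (Fin 4) ℝ) :
    FF α β γ δ d N * M * FF α' β' γ' δ' d N
      = ((d : ℝ))⁻¹ • (Amat α β γ δ d N * M * Amat α' β' γ' δ' d N) := by
  unfold FF
  rw [Matrix.smul_mul, Matrix.smul_mul, Matrix.mul_smul, smul_smul, ← mul_inv,
    Real.mul_self_sqrt (by positivity)]

lemma FF_mul2 (α β γ δ α' β' γ' δ' d N : ℤ) (hd : 0 < d) :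
    FF α β γ δ d N * FF α' β' γ' δ' d N
      = ((d : ℝ))⁻¹ • (Amat α β γ δ d N * Amat α' β' γ' δ' d N) := by
  unfold FF
  rw [Matrix.smul_mul, Matrix.mul_smul, smul_smul, ← mul_inv,
    Real.mul_self_sqrt (by positivity)]

lemma Amat_transpose (α β γ δ d N : ℤ) :
    (Amat α β γ δ d N)ᵀ =
      !![((δ*d : ℤ) : ℝ), ((-γ : ℤ) : ℝ), ((0:ℤ):ℝ), ((0:ℤ):ℝ);
         ((-(β*N) : ℤ) : ℝ), ((α*d : ℤ) : ℝ), ((0:ℤ):ℝ), ((0:ℤ):ℝ);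
         ((0:ℤ):ℝ), ((0:ℤ):ℝ), ((α*d : ℤ) : ℝ), ((β*N : ℤ) : ℝ);
         ((0:ℤ):ℝ), ((0:ℤ):ℝ), ((γ : ℤ) : ℝ), ((δ*d : ℤ) : ℝ)] := by
  ext i j
  fin_cases i <;> fin_cases j <;>
    simp [Amat, Matrix.transpose_apply, Matrix.vecHead, Matrix.vecTail]

set_option maxHeartbeats 2000000 in
lemma FF_symp (α β γ δ d N e : ℤ) (hd : 0 < d) (he : N = d * e)
    (hdet : α * δ * d - β * γ * e = 1) : IsSymplectic (FF α β γ δ d N) := by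
  have hd0 : (d : ℝ) ≠ 0 := by positivity
  have heR : (N : ℝ) = (d : ℝ) * e := by exact_mod_cast congrArg (Int.cast : ℤ → ℝ) he
  have hdR : (α:ℝ) * δ * d - (β:ℝ) * γ * e = 1 := by exact_mod_cast congrArg (Int.cast : ℤ → ℝ) hdet
  unfold IsSymplectic FF
  rw [Matrix.transpose_smul, Matrix.smul_mul, Matrix.smul_mul, Matrix.mul_smul, smul_smul,
    ← mul_inv, Real.mul_self_sqrt (by positivity)]
  have key : (Amat α β γ δ d N)ᵀ * J4 * Amat α β γ δ d N = (d : ℝ) • J4 := by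
    rw [Amat_transpose]
    ext i j
    fin_cases i <;> fin_cases j <;>
        simp [Amat, J4, Matrix.mul_apply, Fin.sum_univ_four, Matrix.vecHead, Matrix.vecTail] <;>
      (try push_cast) <;> (try simp only [heR]) <;>
      (first
        | ring1
        | linear_combination (d:ℝ) * hdR
        | linear_combination (-(d:ℝ)) * hdR)
  rw [key, smul_smul, inv_mul_cancel₀ hd0, one_smul]

set_option maxHeartbeats 2000000 in
lemma FF_mul_partner (α β γ δ d N e : ℤ) (hd : 0 < d) (he : N = d * e)
    (hdet : α * δ * d - β * γ * e = 1) :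
    FF α β γ δ d N * FF δ (-β) (-γ) α d N = 1 := by
  have hd0 : (d : ℝ) ≠ 0 := by positivity
  have heR : (N : ℝ) = (d : ℝ) * e := by exact_mod_cast congrArg (Int.cast : ℤ → ℝ) he
  have hdR : (α:ℝ) * δ * d - (β:ℝ) * γ * e = 1 := by exact_mod_cast congrArg (Int.cast : ℤ → ℝ) hdet
  rw [FF_mul2 _ _ _ _ _ _ _ _ _ _ hd]
  have key : Amat α β γ δ d N * Amat δ (-β) (-γ) α d N = (d : ℝ) • 1 := by
    ext i j
    fin_cases i <;> fin_cases j <;>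
        simp [Amat, Matrix.mul_apply, Fin.sum_univ_four, Matrix.one_apply, Matrix.vecHead, Matrix.vecTail] <;>
      (try push_cast) <;> (try simp only [heR]) <;>
      (first
        | ring1
        | linear_combination (d:ℝ) * hdR
        | linear_combination (-(d:ℝ)) * hdR)
  rw [key, smul_smul, inv_mul_cancel₀ hd0, one_smul]

set_option maxHeartbeats 4000000 in
lemma conj_mem (N d e α β γ δ : ℤ) (hN : 1 ≤ N) (hd : 0 < d) (he : N = d * e)
    (hdet : α * δ * d - β * γ * e = 1) (M : Matrix (Fin 4) (Fin 4) ℝ)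
    (hM : M ∈ ParamodularGroup N) :
    FF α β γ δ d N * M * FF δ (-β) (-γ) α d N ∈ ParamodularGroup N ∧
    (blk M 1 0 = 0 → blk (FF α β γ δ d N * M * FF δ (-β) (-γ) α d N) 1 0 = 0) := by
  have hd0 : (d : ℝ) ≠ 0 := by positivity
  have hN0 : (N : ℝ) ≠ 0 := by positivity
  have he1 : 1 ≤ e := by nlinarith
  have he0 : (e : ℝ) ≠ 0 := by positivity
  have heR : (N : ℝ) = (d : ℝ) * e := by exact_mod_cast congrArg (Int.cast : ℤ → ℝ) he
  have hdet' : δ * α * d - -β * -γ * e = 1 := by linear_combination hdet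
  obtain ⟨hsymp, hint, ⟨m13, h13⟩, ⟨m01, h01⟩, ⟨m21, h21⟩, ⟨m30, h30⟩, ⟨m31, h31⟩,
    ⟨m32, h32⟩⟩ := hM
  obtain ⟨m00, h00⟩ := hint 0 0 (by decide)
  obtain ⟨m02, h02⟩ := hint 0 2 (by decide)
  obtain ⟨m03, h03⟩ := hint 0 3 (by decide)
  obtain ⟨m10, h10⟩ := hint 1 0 (by decide)
  obtain ⟨m11, h11⟩ := hint 1 1 (by decide)
  obtain ⟨m12, h12⟩ := hint 1 2 (by decide)
  obtain ⟨m20, h20⟩ := hint 2 0 (by decide)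
  obtain ⟨m22, h22⟩ := hint 2 2 (by decide)
  obtain ⟨m23, h23⟩ := hint 2 3 (by decide)
  obtain ⟨m33, h33⟩ := hint 3 3 (by decide)
  have hE : FF α β γ δ d N * M * FF δ (-β) (-γ) α d N =
      !![((α*δ*d*m00 + γ*δ*N*m01 - α*β*N*m10 - β*γ*e*m11 : ℤ) : ℝ),
         ((N*(β*δ*m00 + δ*δ*d*m01 - β*β*e*m10 - β*δ*m11) : ℤ) : ℝ),
         ((δ*δ*d*m02 - β*δ*N*m12 - β*δ*N*m03 + β*β*e*m13 : ℤ) : ℝ),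
         ((-(γ*δ)*m02 + β*γ*e*m12 + α*δ*d*m03 - α*β*m13 : ℤ) : ℝ);
         ((-(α*γ)*m00 - γ*γ*e*m01 + α*α*d*m10 + α*γ*m11 : ℤ) : ℝ),
         ((-(β*γ*e)*m00 - γ*δ*N*m01 + α*β*N*m10 + α*δ*d*m11 : ℤ) : ℝ),
         ((-(γ*δ)*m02 + β*γ*e*m03 + α*δ*d*m12 - α*β*m13 : ℤ) : ℝ),
         ((γ*γ*e*m02 - α*γ*N*m03 - α*γ*N*m12 + α*α*d*m13 : ℤ) : ℝ) / (N : ℝ);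
         ((α*α*d*m20 + α*γ*N*m21 + α*γ*N*m30 + γ*γ*e*m31 : ℤ) : ℝ),
         ((N*(α*β*m20 + β*γ*e*m30 + α*δ*d*m21 + γ*δ*m31) : ℤ) : ℝ),
         ((α*δ*d*m22 + γ*δ*N*m32 - α*β*N*m23 - β*γ*e*m33 : ℤ) : ℝ),
         ((-(α*γ)*m22 - γ*γ*e*m32 + α*α*d*m23 + α*γ*m33 : ℤ) : ℝ);
         ((N*(α*β*m20 + α*δ*d*m30 + β*γ*e*m21 + γ*δ*m31) : ℤ) : ℝ),
         ((N*(β*β*e*m20 + β*δ*N*m30 + β*δ*N*m21 + δ*δ*d*m31) : ℤ) : ℝ),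
         ((N*(β*δ*m22 + δ*δ*d*m32 - β*β*e*m23 - β*δ*m33) : ℤ) : ℝ),
         ((-(β*γ*e)*m22 - γ*δ*N*m32 + α*β*N*m23 + α*δ*d*m33 : ℤ) : ℝ)] := by
    rw [FF_mul_mid _ _ _ _ _ _ _ _ _ _ hd]
    ext i j
    fin_cases i <;> fin_cases j <;>
        simp only [Matrix.smul_apply, Matrix.mul_apply, Fin.sum_univ_four, smul_eq_mul] <;>
        simp [Amat, Matrix.vecHead, Matrix.vecTail, h00, h01, h02, h03, h10, h11, h12,
          h13, h20, h21, h22, h23, h30, h31, h32, h33] <;>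
      (try push_cast) <;> (try simp only [heR]) <;> (try field_simp) <;>
      (first | rfl | ring1)
  have hFs : IsSymplectic (FF α β γ δ d N) := FF_symp α β γ δ d N e hd he hdet
  have hGs : IsSymplectic (FF δ (-β) (-γ) α d N) := FF_symp δ (-β) (-γ) α d N e hd he hdet'
  have hS : IsSymplectic (FF α β γ δ d N * M * FF δ (-β) (-γ) α d N) :=
    symp_mul (symp_mul hFs hsymp) hGs
  constructor
  · rw [hE] at hS ⊢
    refine ⟨hS, ?_, ⟨_, rfl⟩, ⟨_, Int.cast_mul _ _⟩, ⟨_, Int.cast_mul _ _⟩,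
      ⟨_, Int.cast_mul _ _⟩, ⟨_, Int.cast_mul _ _⟩, ⟨_, Int.cast_mul _ _⟩⟩
    intro i j hij
    fin_cases i <;> fin_cases j <;> first | exact absurd rfl hij | exact ⟨_, rfl⟩
  · intro hC
    have hc20 : M 2 0 = 0 := congrFun (congrFun hC 0) 0
    have hc21 : M 2 1 = 0 := congrFun (congrFun hC 0) 1
    have hc30 : M 3 0 = 0 := congrFun (congrFun hC 1) 0
    have hc31 : M 3 1 = 0 := congrFun (congrFun hC 1) 1
    have hz20 : m20 = 0 := by rw [h20] at hc20; exact_mod_cast hc20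
    have hz21 : m21 = 0 := by
      rw [h21] at hc21
      have : (N : ℝ) * m21 = 0 := hc21
      rcases mul_eq_zero.1 this with h | h
      · exact absurd h hN0
      · exact_mod_cast h
    have hz30 : m30 = 0 := by
      rw [h30] at hc30
      have : (N : ℝ) * m30 = 0 := hc30
      rcases mul_eq_zero.1 this with h | h
      · exact absurd h hN0
      · exact_mod_cast h
    have hz31 : m31 = 0 := by
      rw [h31] at hc31
      have : (N : ℝ) * m31 = 0 := hc31
      rcases mul_eq_zero.1 this with h | h
      · exact absurd h hN0
      · exact_mod_cast h
    rw [hE]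
    ext i j
    fin_cases i <;> fin_cases j <;>
      · simp [blk, Matrix.vecHead, Matrix.vecTail, hz20, hz21, hz30, hz31]

set_option maxHeartbeats 2000000 in
lemma FFsq_mem (N d e α β γ δ : ℤ) (hN : 1 ≤ N) (hd : 0 < d) (he : N = d * e)
    (hdet : α * δ * d - β * γ * e = 1) :
    FF α β γ δ d N * FF α β γ δ d N ∈ ParamodularGroup N := by
  have hd0 : (d : ℝ) ≠ 0 := by positivity
  have heR : (N : ℝ) = (d : ℝ) * e := by exact_mod_cast congrArg (Int.cast : ℤ → ℝ) he
  have hE : FF α β γ δ d N * FF α β γ δ d N =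
      !![((δ*δ*d + β*γ*e : ℤ) : ℝ), ((N * (-(β*(α+δ))) : ℤ) : ℝ), ((0:ℤ):ℝ), ((0:ℤ):ℝ);
         ((-(γ*(δ+α)) : ℤ) : ℝ), ((β*γ*e + α*α*d : ℤ) : ℝ), ((0:ℤ):ℝ), ((0:ℤ):ℝ)/(N:ℝ);
         ((0:ℤ):ℝ), ((N*0 : ℤ):ℝ), ((α*α*d + β*γ*e : ℤ) : ℝ), ((γ*(α+δ) : ℤ) : ℝ);
         ((N*0:ℤ):ℝ), ((N*0:ℤ):ℝ), ((N*(β*(α+δ)) : ℤ) : ℝ), ((β*γ*e + δ*δ*d : ℤ) : ℝ)] := by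
    rw [FF_mul2 _ _ _ _ _ _ _ _ _ _ hd]
    ext i j
    fin_cases i <;> fin_cases j <;>
        simp only [Matrix.smul_apply, Matrix.mul_apply, Fin.sum_univ_four, smul_eq_mul] <;>
        simp [Amat, Matrix.vecHead, Matrix.vecTail] <;>
      (try push_cast) <;> (try simp only [heR]) <;> (try field_simp) <;>
      (first | rfl | ring1)
  have hFs : IsSymplectic (FF α β γ δ d N) := FF_symp α β γ δ d N e hd he hdet
  have hS : IsSymplectic (FF α β γ δ d N * FF α β γ δ d N) := symp_mul hFs hFs
  rw [hE] at hS ⊢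
  refine ⟨hS, ?_, ⟨_, rfl⟩, ⟨_, Int.cast_mul _ _⟩, ⟨_, Int.cast_mul _ _⟩,
    ⟨_, Int.cast_mul _ _⟩, ⟨_, Int.cast_mul _ _⟩, ⟨_, Int.cast_mul _ _⟩⟩
  intro i j hij
  fin_cases i <;> fin_cases j <;> first | exact absurd rfl hij | exact ⟨_, rfl⟩

end FrickeAux

set_option maxHeartbeats 2000000 in
/-- Section 3: the Fricke-type element `F_d` squares into `Σ_N` and normalizes both
`Σ_N` and `Σ_{N,∞}`. -/
theorem Fd_normalizes (N : ℤ) (hN : 1 ≤ N) (hsf : Squarefree N)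
    (d : ℤ) (hd : 0 < d) (hdN : d ∣ N) (α β γ δ : ℤ)
    (hdet : α * δ * d - β * γ * (N / d) = 1) :
    let Vd : Matrix (Fin 2) (Fin 2) ℝ :=
      (Real.sqrt d)⁻¹ •
        !![((α * d : ℤ) : ℝ), ((β * N : ℤ) : ℝ); ((γ : ℤ) : ℝ), ((δ * d : ℤ) : ℝ)]
    let Fd : Matrix (Fin 4) (Fin 4) ℝ :=
      !![Vd⁻¹ 0 0, Vd⁻¹ 0 1, 0, 0;
         Vd⁻¹ 1 0, Vd⁻¹ 1 1, 0, 0;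
         0, 0, Vdᵀ 0 0, Vdᵀ 0 1;
         0, 0, Vdᵀ 1 0, Vdᵀ 1 1]
    Fd * Fd ∈ ParamodularGroup N ∧
    (fun X => Fd * X * Fd⁻¹) '' ParamodularGroup N = ParamodularGroup N ∧
    (fun X => Fd * X * Fd⁻¹) '' ParamodularInfinity N = ParamodularInfinity N := by
  intro Vd Fd
  have hd0 : (d : ℝ) ≠ 0 := by positivity
  have hN0 : (N : ℝ) ≠ 0 := by positivity
  set e : ℤ := N / d with hedef
  have he : N = d * e := (Int.mul_ediv_cancel' hdN).symm
  have hdet2 : α * δ * d - β * γ * e = 1 := hdet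
  have hdet' : δ * α * d - -β * -γ * e = 1 := by linear_combination hdet2
  have heR : (N : ℝ) = (d : ℝ) * e := by exact_mod_cast congrArg (Int.cast : ℤ → ℝ) he
  have hdR : (α:ℝ) * δ * d - (β:ℝ) * γ * e = 1 := by
    exact_mod_cast congrArg (Int.cast : ℤ → ℝ) hdet2
  have hVd : Vd = (Real.sqrt d)⁻¹ •
      !![((α * d : ℤ) : ℝ), ((β * N : ℤ) : ℝ); ((γ : ℤ) : ℝ), ((δ * d : ℤ) : ℝ)] := rfl
  have hVinv : Vd⁻¹ = (Real.sqrt d)⁻¹ •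
      !![((δ * d : ℤ) : ℝ), ((-(β * N) : ℤ) : ℝ); ((-γ : ℤ) : ℝ), ((α * d : ℤ) : ℝ)] := by
    apply Matrix.inv_eq_right_inv
    rw [hVd, Matrix.smul_mul, Matrix.mul_smul, smul_smul, ← mul_inv,
      Real.mul_self_sqrt (by positivity)]
    have key : (!![((α * d : ℤ) : ℝ), ((β * N : ℤ) : ℝ); ((γ : ℤ) : ℝ), ((δ * d : ℤ) : ℝ)] *
        !![((δ * d : ℤ) : ℝ), ((-(β * N) : ℤ) : ℝ); ((-γ : ℤ) : ℝ), ((α * d : ℤ) : ℝ)])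
        = (d : ℝ) • 1 := by
      ext i j
      fin_cases i <;> fin_cases j <;>
          simp [Matrix.mul_apply, Fin.sum_univ_two, Matrix.one_apply, Matrix.vecHead, Matrix.vecTail] <;>
        (try push_cast) <;> (try simp only [heR]) <;>
        (first
          | ring1
          | linear_combination (d:ℝ) * hdR
          | linear_combination (-(d:ℝ)) * hdR)
    rw [key, smul_smul, inv_mul_cancel₀ hd0, one_smul]
  have hFd : Fd = FF α β γ δ d N := by
    show (!![Vd⁻¹ 0 0, Vd⁻¹ 0 1, 0, 0;
         Vd⁻¹ 1 0, Vd⁻¹ 1 1, 0, 0;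
         0, 0, Vdᵀ 0 0, Vdᵀ 0 1;
         0, 0, Vdᵀ 1 0, Vdᵀ 1 1] : Matrix (Fin 4) (Fin 4) ℝ) = FF α β γ δ d N
    rw [hVinv, hVd]
    ext i j
    fin_cases i <;> fin_cases j <;>
      simp [FF, Amat, Matrix.vecHead, Matrix.vecTail] <;> (try push_cast) <;> (try ring1)
  have hFdinv : Fd⁻¹ = FF δ (-β) (-γ) α d N := by
    apply Matrix.inv_eq_right_inv
    rw [hFd]
    exact FF_mul_partner α β γ δ d N e hd he hdet2
  have hFG : Fd * Fd⁻¹ = 1 := by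
    rw [hFdinv, hFd]; exact FF_mul_partner α β γ δ d N e hd he hdet2
  have hGF : Fd⁻¹ * Fd = 1 := by
    rw [hFdinv, hFd]
    have := FF_mul_partner δ (-β) (-γ) α d N e hd he hdet'
    simpa using this
  have hsandwich : ∀ X : Matrix (Fin 4) (Fin 4) ℝ, Fd * (Fd⁻¹ * X * Fd) * Fd⁻¹ = X := by
    intro X
    have h : Fd * (Fd⁻¹ * X * Fd) * Fd⁻¹ = (Fd * Fd⁻¹) * X * (Fd * Fd⁻¹) := by
      simp only [Matrix.mul_assoc]
    rw [h, hFG, Matrix.one_mul, Matrix.mul_one]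
  refine ⟨?_, ?_, ?_⟩
  · rw [hFd]
    exact FFsq_mem N d e α β γ δ hN hd he hdet2
  · ext X
    simp only [Set.mem_image]
    constructor
    · rintro ⟨M, hM, rfl⟩
      rw [hFdinv, hFd]
      exact (conj_mem N d e α β γ δ hN hd he hdet2 M hM).1
    · intro hX
      refine ⟨Fd⁻¹ * X * Fd, ?_, hsandwich X⟩
      rw [hFdinv, hFd]
      have := (conj_mem N d e δ (-β) (-γ) α hN hd he hdet' X hX).1
      simpa using this
  · ext X
    simp only [Set.mem_image]
    constructor
    · rintro ⟨M, hM, rfl⟩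
      obtain ⟨hM1, hM2⟩ := hM
      have h := conj_mem N d e α β γ δ hN hd he hdet2 M hM1
      rw [hFdinv, hFd]
      exact ⟨h.1, h.2 hM2⟩
    · rintro ⟨hX1, hX2⟩
      refine ⟨Fd⁻¹ * X * Fd, ?_, hsandwich X⟩
      rw [hFdinv, hFd]
      have h := conj_mem N d e δ (-β) (-γ) α hN hd he hdet' X hX1
      constructor
      · have := h.1; simpa using this
      · have := h.2 hX2; simpa using this
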